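/- For every d ∈ ℕ_+ and t ∈ ℕ, the curve γ_{t,d}: [0,1] → (S^1)^d ⊂ ℝ^{2d}, γ_{t,d}(s) = (e^{2πi(t+1)^{d-1}s}, e^{2πi(t+1)^{d-2}s}, ..., e^{2πis}) (each circle factor embedded as (cos, sin) in ℝ^2), is a t-design curve on the d-torus, with length ℓ(γ_{t,d}) = 2π√(Σ_{j=0}^{d-1} (t+1)^{2j}), and this satisfies ℓ(γ_{t,d}) ≤ 2π√(Σ_{j=0}^{d-1} 4^j) · t^{d-1} for t ≥ 1. -/

import Mathlib

open Real MvPolynomial MeasureTheory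

/-- The curve `γ_{t,d}(s) = (e^{2πi(t+1)^{d-1}s}, ..., e^{2πis})` on the `d`-torus
`(S¹)^d ⊂ ℝ^{2d}`, each circle factor embedded as `(cos, sin)`. -/
noncomputable def torusCurveD (t d : ℕ) (s : ℝ) : EuclideanSpace ℝ (Fin d × Fin 2) :=
  (WithLp.equiv 2 (Fin d × Fin 2 → ℝ)).symm fun p =>
    ![Real.cos (2 * π * ((t + 1 : ℝ) ^ (d - 1 - (p.1 : ℕ))) * s),
      Real.sin (2 * π * ((t + 1 : ℝ) ^ (d - 1 - (p.1 : ℕ))) * s)] p.2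

/-- A point of the `d`-torus `(S¹)^d ⊂ ℝ^{2d}` given by angles `θ`. -/
noncomputable def torusPoint (d : ℕ) (θ : Fin d → ℝ) : Fin d × Fin 2 → ℝ :=
  fun p => ![Real.cos (θ p.1), Real.sin (θ p.1)] p.2



lemma intexp1 (k : ℤ) : ∫ s in (0:ℝ)..1, Complex.exp (2 * π * Complex.I * k * s) =
    if k = 0 then 1 else 0 := by
  rcases eq_or_ne k 0 with h | h
  · simp [h]
  · have hc : (2 * π * Complex.I * k : ℂ) ≠ 0 := by
      simp [Real.pi_ne_zero, Complex.I_ne_zero, h]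
    rw [if_neg h]
    have := integral_exp_mul_complex (a := (0:ℝ)) (b := 1) hc
    simp only [Complex.ofReal_one, mul_one, Complex.ofReal_zero, mul_zero, Complex.exp_zero] at this
    rw [this]
    have : Complex.exp (2 * π * Complex.I * k) = 1 := by
      rw [show (2 * π * Complex.I * k : ℂ) = k * (2 * π * Complex.I) by ring]
      exact Complex.exp_int_mul_two_pi_mul_I k
    rw [this]; simp

lemma intexp2 (m : ℤ) : ∫ θ in (0:ℝ)..(2*π), Complex.exp (m * θ * Complex.I) =
    if m = 0 then (2*π : ℂ) else 0 := by
  rcases eq_or_ne m 0 with h | h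
  · simp [h]
  · have hc : (m * Complex.I : ℂ) ≠ 0 := by simp [Complex.I_ne_zero, h]
    rw [if_neg h]
    have := integral_exp_mul_complex (a := (0:ℝ)) (b := 2*π) hc
    simp only [Complex.ofReal_zero, mul_zero, Complex.exp_zero] at this
    have h2 : ∀ θ : ℝ, (m : ℂ) * θ * Complex.I = m * Complex.I * θ := fun θ => by ring
    simp_rw [h2]
    rw [this]
    have : Complex.exp (m * Complex.I * (2*π : ℝ)) = 1 := by
      rw [show (m * Complex.I * (2*π : ℝ) : ℂ) = m * (2 * π * Complex.I) by push_cast; ring]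
      exact Complex.exp_int_mul_two_pi_mul_I m
    rw [this]; simp

lemma basezero (t : ℕ) : ∀ (d : ℕ) (m : ℕ → ℤ), (∀ i < d, |m i| ≤ t) →
    (∑ i ∈ Finset.range d, m i * (t + 1 : ℤ) ^ (d - 1 - i)) = 0 → ∀ i < d, m i = 0 := by
  intro d
  induction d with
  | zero => intro m _ _ i hi; omega
  | succ n ih =>
    intro m hm hsum i hi
    rw [Finset.sum_range_succ] at hsum
    have h0 : m n * (t + 1 : ℤ) ^ (n + 1 - 1 - n) = m n := by simp
    rw [h0] at hsum
    have hdvdS : (t + 1 : ℤ) ∣ ∑ i ∈ Finset.range n, m i * (t + 1 : ℤ) ^ (n + 1 - 1 - i) := by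
      apply Finset.dvd_sum
      intro j hj
      have hj' : j < n := Finset.mem_range.mp hj
      rw [show n + 1 - 1 - j = (n - 1 - j) + 1 by omega, pow_succ]
      exact Dvd.dvd.mul_left (dvd_mul_left _ _) _
    have hdvd : (t + 1 : ℤ) ∣ m n := by
      have : m n = -∑ i ∈ Finset.range n, m i * (t + 1 : ℤ) ^ (n + 1 - 1 - i) := by linarith
      rw [this]; exact hdvdS.neg_right
    have hlast : m n = 0 := Int.eq_zero_of_abs_lt_dvd hdvd
      (lt_of_le_of_lt (hm n (by omega)) (by push_cast; omega))
    rcases eq_or_lt_of_le (Nat.lt_succ_iff.mp hi) with rfl | hin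
    · exact hlast
    · -- sum over range n is zero, factor out t+1
      have hS : ∑ i ∈ Finset.range n, m i * (t + 1 : ℤ) ^ (n + 1 - 1 - i) = 0 := by
        rw [hlast] at hsum; linarith
      have hfac : ∑ i ∈ Finset.range n, m i * (t + 1 : ℤ) ^ (n + 1 - 1 - i) =
          (t + 1 : ℤ) * ∑ i ∈ Finset.range n, m i * (t + 1 : ℤ) ^ (n - 1 - i) := by
        rw [Finset.mul_sum]
        apply Finset.sum_congr rfl
        intro j hj
        have hj' : j < n := Finset.mem_range.mp hj
        rw [show n + 1 - 1 - j = (n - 1 - j) + 1 by omega, pow_succ]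
        ring
      rw [hfac] at hS
      have ht1 : (t + 1 : ℤ) ≠ 0 := by positivity
      have hS' : ∑ i ∈ Finset.range n, m i * (t + 1 : ℤ) ^ (n - 1 - i) = 0 := by
        rcases mul_eq_zero.mp hS with h | h
        · exact absurd h ht1
        · exact h
      exact ih m (fun j hj => hm j (by omega)) hS' i hin

noncomputable def fw (a b : ℕ) (q : ℕ × ℕ) : ℂ :=
  (a.choose q.1) * (b.choose q.2) * (-1 : ℂ)^(b - q.2) / (2^a * (2*Complex.I)^b)

def ffreq (a b : ℕ) (q : ℕ × ℕ) : ℤ := 2 * (q.1 + q.2) - (a + b)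

lemma exp_pow_mul (x : ℝ) (c : ℂ) (n : ℕ) : Complex.exp (c * x * Complex.I) ^ n =
    Complex.exp ((n : ℂ) * c * x * Complex.I) := by
  rw [← Complex.exp_nat_mul]; ring_nf

lemma cos_pow_expand (a : ℕ) (x : ℝ) :
    ((Real.cos x : ℂ))^a = ∑ j ∈ Finset.range (a+1),
      (a.choose j : ℂ) / 2^a * Complex.exp (((2*j - a : ℤ) : ℂ) * x * Complex.I) := by
  have hc : (Real.cos x : ℂ) = (Complex.exp (x * Complex.I) + Complex.exp (-(x * Complex.I))) / 2 := by
    rw [Complex.ofReal_cos, Complex.cos]; ring_nf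
  rw [hc, div_pow, add_pow]
  rw [Finset.sum_div]
  apply Finset.sum_congr rfl
  intro j hj
  have hja : j ≤ a := Nat.lt_succ_iff.mp (Finset.mem_range.mp hj)
  rw [show Complex.exp (x * Complex.I) ^ j = Complex.exp ((j:ℂ) * x * Complex.I) by
        rw [← Complex.exp_nat_mul]; ring_nf,
      show Complex.exp (-(x * Complex.I)) ^ (a - j) = Complex.exp (-(((a-j : ℕ):ℂ)) * x * Complex.I) by
        rw [← Complex.exp_nat_mul]; ring_nf,
      ← Complex.exp_add]
  have harg : (j:ℂ) * x * Complex.I + -(((a-j : ℕ):ℂ)) * x * Complex.I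
      = ((2*j - a : ℤ) : ℂ) * x * Complex.I := by
    have : (((a-j : ℕ)):ℂ) = (a : ℂ) - j := by
      push_cast [Nat.cast_sub hja]; ring
    rw [this]; push_cast; ring
  rw [harg]; ring

lemma sin_pow_expand (b : ℕ) (x : ℝ) :
    ((Real.sin x : ℂ))^b = ∑ l ∈ Finset.range (b+1),
      (b.choose l : ℂ) * (-1:ℂ)^(b-l) / (2*Complex.I)^b *
        Complex.exp (((2*l - b : ℤ) : ℂ) * x * Complex.I) := by
  have hs : (Real.sin x : ℂ) = (Complex.exp (x * Complex.I) + -Complex.exp (-(x * Complex.I))) / (2 * Complex.I) := by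
    rw [Complex.ofReal_sin, Complex.sin]
    rw [div_eq_div_iff (by simp [Complex.I_ne_zero]) (by simp [Complex.I_ne_zero])]
    ring_nf
    rw [Complex.I_sq]
    ring
  rw [hs, div_pow, add_pow]
  rw [Finset.sum_div]
  apply Finset.sum_congr rfl
  intro l hl
  have hlb : l ≤ b := Nat.lt_succ_iff.mp (Finset.mem_range.mp hl)
  rw [neg_pow]
  rw [show Complex.exp (x * Complex.I) ^ l = Complex.exp ((l:ℂ) * x * Complex.I) by
        rw [← Complex.exp_nat_mul]; ring_nf,
      show Complex.exp (-(x * Complex.I)) ^ (b - l) = Complex.exp (-(((b-l : ℕ):ℂ)) * x * Complex.I) by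
        rw [← Complex.exp_nat_mul]; ring_nf]
  have hmul : Complex.exp ((l:ℂ) * x * Complex.I) * Complex.exp (-(((b-l : ℕ):ℂ)) * x * Complex.I)
      = Complex.exp (((2*l - b : ℤ) : ℂ) * x * Complex.I) := by
    rw [← Complex.exp_add]
    congr 1
    push_cast [Nat.cast_sub hlb]
    ring
  rw [show Complex.exp ((l:ℂ) * x * Complex.I) * ((-1:ℂ)^(b-l) * Complex.exp (-(((b-l : ℕ):ℂ)) * x * Complex.I)) =
      (-1:ℂ)^(b-l) * (Complex.exp ((l:ℂ) * x * Complex.I) * Complex.exp (-(((b-l : ℕ):ℂ)) * x * Complex.I)) by ring,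
    hmul]
  ring

lemma cos_pow_sin_pow_expand (a b : ℕ) (x : ℝ) :
    ((Real.cos x : ℂ))^a * ((Real.sin x : ℂ))^b =
      ∑ q ∈ Finset.range (a+1) ×ˢ Finset.range (b+1),
        fw a b q * Complex.exp ((ffreq a b q : ℤ) * x * Complex.I) := by
  rw [cos_pow_expand, sin_pow_expand, Finset.sum_mul_sum, Finset.sum_product]
  apply Finset.sum_congr rfl
  intro j hj
  apply Finset.sum_congr rfl
  intro l hl
  rw [mul_mul_mul_comm, ← Complex.exp_add]
  have harg : ((2*j - a : ℤ) : ℂ) * x * Complex.I + ((2*l - b : ℤ) : ℂ) * x * Complex.I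
      = ((ffreq a b (j,l) : ℤ) : ℂ) * x * Complex.I := by
    unfold ffreq; push_cast; ring
  rw [harg]
  unfold fw
  field_simp
noncomputable def torusVel (t d : ℕ) (s : ℝ) : EuclideanSpace ℝ (Fin d × Fin 2) :=
  (WithLp.equiv 2 (Fin d × Fin 2 → ℝ)).symm fun p =>
    ![-Real.sin (2 * π * ((t + 1 : ℝ) ^ (d - 1 - (p.1 : ℕ))) * s) * (2 * π * ((t + 1 : ℝ) ^ (d - 1 - (p.1 : ℕ)))),
      Real.cos (2 * π * ((t + 1 : ℝ) ^ (d - 1 - (p.1 : ℕ))) * s) * (2 * π * ((t + 1 : ℝ) ^ (d - 1 - (p.1 : ℕ))))] p.2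

lemma hasDerivAt_torusCurveD (t d : ℕ) (s : ℝ) :
    HasDerivAt (torusCurveD t d) (torusVel t d s) s := by
  have key : HasDerivAt (fun s => (WithLp.equiv 2 (Fin d × Fin 2 → ℝ)) (torusCurveD t d s))
      ((WithLp.equiv 2 (Fin d × Fin 2 → ℝ)) (torusVel t d s)) s := by
    rw [hasDerivAt_pi]
    intro p
    obtain ⟨i, j⟩ := p
    set c : ℝ := 2 * π * ((t + 1 : ℝ) ^ (d - 1 - (i : ℕ))) with hc
    have hid : HasDerivAt (fun x : ℝ => c * x) c s := by
      simpa using (hasDerivAt_id s).const_mul c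
    fin_cases j
    · simpa [torusCurveD, torusVel, ← hc] using hid.cos
    · simpa [torusCurveD, torusVel, ← hc] using hid.sin
  have h2 := ((PiLp.continuousLinearEquiv 2 ℝ
      (fun _ : Fin d × Fin 2 => ℝ)).symm.toContinuousLinearMap.hasFDerivAt.comp_hasDerivAt s key)
  exact h2
lemma norm_torusVel (t d : ℕ) (s : ℝ) :
    ‖torusVel t d s‖ = 2 * π * Real.sqrt (∑ j ∈ Finset.range d, (t + 1 : ℝ) ^ (2 * j)) := by
  rw [EuclideanSpace.norm_eq]
  have hsum : ∑ p : Fin d × Fin 2, ‖torusVel t d s p‖ ^ 2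
      = (2*π)^2 * ∑ j ∈ Finset.range d, (t + 1 : ℝ) ^ (2 * j) := by
    rw [Fintype.sum_prod_type]
    have hrow : ∀ i : Fin d, ∑ j : Fin 2, ‖torusVel t d s (i, j)‖ ^ 2
        = (2*π)^2 * ((t + 1 : ℝ) ^ (d - 1 - (i : ℕ)))^2 := by
      intro i
      rw [Fin.sum_univ_two]
      simp only [torusVel, Real.norm_eq_abs, sq_abs]
      simp only [WithLp.equiv_symm_apply, PiLp.toLp_apply, Matrix.cons_val_zero, Matrix.cons_val_one, Matrix.head_cons]
      set c := 2 * π * ((t + 1 : ℝ) ^ (d - 1 - (i : ℕ))) with hc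
      have : (-Real.sin (c*s) * c)^2 + (Real.cos (c*s) * c)^2
          = ((Real.sin (c*s))^2 + (Real.cos (c*s))^2) * c^2 := by ring
      rw [this, Real.sin_sq_add_cos_sq, one_mul, hc]
      ring
    rw [Finset.sum_congr rfl (fun i _ => hrow i)]
    rw [← Finset.mul_sum]
    congr 1
    rw [Fin.sum_univ_eq_sum_range (fun i => ((t + 1 : ℝ) ^ (d - 1 - i))^2) d]
    rw [← Finset.sum_range_reflect (fun j => (t + 1 : ℝ) ^ (2 * j)) d]
    apply Finset.sum_congr rfl
    intro i _
    rw [← pow_mul]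
    ring_nf
  rw [hsum, Real.sqrt_mul (by positivity), Real.sqrt_sq (by positivity)]

lemma length_bound (d t : ℕ) (hd : 0 < d) (ht : 1 ≤ t) :
    2 * π * Real.sqrt (∑ j ∈ Finset.range d, (t + 1 : ℝ) ^ (2 * j)) ≤
      2 * π * Real.sqrt (∑ j ∈ Finset.range d, (4 : ℝ) ^ j) * (t : ℝ) ^ (d - 1) := by
  have ht1 : (1 : ℝ) ≤ t := by exact_mod_cast ht
  have key : ∑ j ∈ Finset.range d, (t + 1 : ℝ) ^ (2 * j)
      ≤ (∑ j ∈ Finset.range d, (4 : ℝ) ^ j) * ((t : ℝ) ^ (d - 1))^2 := by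
    rw [Finset.sum_mul]
    apply Finset.sum_le_sum
    intro j hj
    have hjd : j ≤ d - 1 := by
      have := Finset.mem_range.mp hj; omega
    have h1 : (t + 1 : ℝ) ^ (2 * j) ≤ (2 * t : ℝ) ^ (2 * j) := by
      apply pow_le_pow_left₀ (by positivity)
      linarith
    have h2 : (2 * t : ℝ) ^ (2 * j) = 4 ^ j * (t : ℝ) ^ (2 * j) := by
      rw [mul_pow]
      congr 1
      rw [pow_mul]
      norm_num
    have h3 : (t : ℝ) ^ (2 * j) ≤ (t : ℝ) ^ (2 * (d - 1)) :=
      pow_le_pow_right₀ ht1 (by omega)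
    calc (t + 1 : ℝ) ^ (2 * j) ≤ 4 ^ j * (t : ℝ) ^ (2 * j) := by rw [← h2]; exact h1
      _ ≤ 4 ^ j * (t : ℝ) ^ (2 * (d - 1)) := by
          apply mul_le_mul_of_nonneg_left h3 (by positivity)
      _ = 4 ^ j * ((t : ℝ) ^ (d - 1))^2 := by rw [← pow_mul]; ring_nf
  calc 2 * π * Real.sqrt (∑ j ∈ Finset.range d, (t + 1 : ℝ) ^ (2 * j))
      ≤ 2 * π * Real.sqrt ((∑ j ∈ Finset.range d, (4 : ℝ) ^ j) * ((t : ℝ) ^ (d - 1))^2) := by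
        apply mul_le_mul_of_nonneg_left (Real.sqrt_le_sqrt key) (by positivity)
    _ = 2 * π * Real.sqrt (∑ j ∈ Finset.range d, (4 : ℝ) ^ j) * (t : ℝ) ^ (d - 1) := by
        rw [Real.sqrt_mul (by positivity), Real.sqrt_sq (by positivity)]
        ring
section Monomial
variable (t d : ℕ) (a b : Fin d → ℕ)

/-- index sets -/
abbrev RR (i : Fin d) : Finset (ℕ × ℕ) := Finset.range (a i + 1) ×ˢ Finset.range (b i + 1)

/-- total frequency for a choice `g` -/
def KK (g : ∀ i ∈ (Finset.univ : Finset (Fin d)), ℕ × ℕ) : ℤ :=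
  ∑ i : Fin d, ffreq (a i) (b i) (g i (Finset.mem_univ i)) * (t + 1 : ℤ) ^ (d - 1 - (i : ℕ))

lemma claimA :
    (∫ s in (0:ℝ)..1, ∏ i : Fin d,
        ((Real.cos (2 * π * ((t + 1 : ℝ) ^ (d - 1 - (i : ℕ))) * s) : ℂ))^(a i) *
        ((Real.sin (2 * π * ((t + 1 : ℝ) ^ (d - 1 - (i : ℕ))) * s) : ℂ))^(b i)) =
      ∑ g ∈ Finset.univ.pi (RR d a b),
        (∏ i : Fin d, fw (a i) (b i) (g i (Finset.mem_univ i))) *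
          (if KK t d a b g = 0 then 1 else 0) := by
  have hint : ∀ s : ℝ, (∏ i : Fin d,
        ((Real.cos (2 * π * ((t + 1 : ℝ) ^ (d - 1 - (i : ℕ))) * s) : ℂ))^(a i) *
        ((Real.sin (2 * π * ((t + 1 : ℝ) ^ (d - 1 - (i : ℕ))) * s) : ℂ))^(b i)) =
      ∑ g ∈ Finset.univ.pi (RR d a b),
        (∏ i : Fin d, fw (a i) (b i) (g i (Finset.mem_univ i))) *
          Complex.exp (2 * π * Complex.I * (KK t d a b g) * s) := by
    intro s
    have step1 : ∀ i : Fin d,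
        ((Real.cos (2 * π * ((t + 1 : ℝ) ^ (d - 1 - (i : ℕ))) * s) : ℂ))^(a i) *
        ((Real.sin (2 * π * ((t + 1 : ℝ) ^ (d - 1 - (i : ℕ))) * s) : ℂ))^(b i) =
        ∑ q ∈ RR d a b i, fw (a i) (b i) q *
          Complex.exp (2 * π * Complex.I *
            ((ffreq (a i) (b i) q * (t + 1 : ℤ) ^ (d - 1 - (i : ℕ)) : ℤ) : ℂ) * s) := by
      intro i
      rw [cos_pow_sin_pow_expand]
      refine Finset.sum_congr rfl fun q _ => ?_
      congr 2
      push_cast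
      ring
    rw [Finset.prod_congr rfl (fun i _ => step1 i), Finset.prod_sum]
    refine Finset.sum_congr rfl fun g hg => ?_
    rw [Finset.prod_mul_distrib]
    have h1 : (∏ x ∈ Finset.univ.attach, fw (a x.1) (b x.1) (g x.1 x.2))
        = ∏ i : Fin d, fw (a i) (b i) (g i (Finset.mem_univ i)) :=
      Finset.prod_attach _ (fun i => fw (a i) (b i) (g i (Finset.mem_univ i)))
    have h2 : (∏ x ∈ Finset.univ.attach, Complex.exp (2 * (π:ℂ) * Complex.I *
          ((ffreq (a x.1) (b x.1) (g x.1 x.2) * (t + 1 : ℤ) ^ (d - 1 - (x.1 : ℕ)) : ℤ) : ℂ) * s))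
        = Complex.exp (2 * π * Complex.I * (KK t d a b g) * s) := by
      rw [← Complex.exp_sum]
      congr 1
      rw [Finset.sum_attach _ (fun i => 2 * (π:ℂ) * Complex.I *
            ((ffreq (a i) (b i) (g i (Finset.mem_univ i)) * (t + 1 : ℤ) ^ (d - 1 - (i : ℕ)) : ℤ) : ℂ) * s)]
      unfold KK
      push_cast
      rw [← Finset.sum_mul, ← Finset.mul_sum]
    rw [h1, h2]
  rw [intervalIntegral.integral_congr (fun s _ => hint s)]
  rw [intervalIntegral.integral_finset_sum]
  · refine Finset.sum_congr rfl fun g hg => ?_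
    rw [intervalIntegral.integral_const_mul, intexp1]
  · intro g hg
    apply Continuous.intervalIntegrable
    continuity

end Monomial

section Monomial2
variable (t d : ℕ) (a b : Fin d → ℕ)

lemma factor_eq (i : Fin d) :
    (2*π:ℂ)⁻¹ * (∫ θ in (0:ℝ)..(2*π), ((Real.cos θ : ℂ))^(a i) * ((Real.sin θ : ℂ))^(b i)) =
      ∑ q ∈ RR d a b i, fw (a i) (b i) q * (if ffreq (a i) (b i) q = 0 then 1 else 0) := by
  rw [intervalIntegral.integral_congr (fun θ _ => cos_pow_sin_pow_expand (a i) (b i) θ)]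
  rw [intervalIntegral.integral_finset_sum (fun q _ => by
    apply Continuous.intervalIntegrable
    continuity)]
  rw [Finset.mul_sum]
  refine Finset.sum_congr rfl fun q _ => ?_
  rw [intervalIntegral.integral_const_mul, intexp2]
  split_ifs with h
  · have h2pi : ((π:ℂ)) ≠ 0 := by
      simpa using Complex.ofReal_ne_zero.mpr Real.pi_ne_zero
    field_simp
  · simp

lemma claimB (hdeg : ∑ i : Fin d, (a i + b i) ≤ t) :
    (∏ i : Fin d, (2*π:ℂ)⁻¹ *
        (∫ θ in (0:ℝ)..(2*π), ((Real.cos θ : ℂ))^(a i) * ((Real.sin θ : ℂ))^(b i))) =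
      ∑ g ∈ Finset.univ.pi (RR d a b),
        (∏ i : Fin d, fw (a i) (b i) (g i (Finset.mem_univ i))) *
          (if KK t d a b g = 0 then 1 else 0) := by
  rw [Finset.prod_congr rfl (fun i _ => factor_eq d a b i), Finset.prod_sum]
  refine Finset.sum_congr rfl fun g hg => ?_
  rw [Finset.prod_mul_distrib]
  have h1 : (∏ x ∈ Finset.univ.attach, fw (a x.1) (b x.1) (g x.1 x.2))
      = ∏ i : Fin d, fw (a i) (b i) (g i (Finset.mem_univ i)) :=
    Finset.prod_attach _ (fun i => fw (a i) (b i) (g i (Finset.mem_univ i)))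
  rw [h1]
  congr 1
  have h2 : (∏ x ∈ Finset.univ.attach,
        (if ffreq (a x.1) (b x.1) (g x.1 x.2) = 0 then (1:ℂ) else 0))
      = ∏ i : Fin d, (if ffreq (a i) (b i) (g i (Finset.mem_univ i)) = 0 then (1:ℂ) else 0) :=
    Finset.prod_attach _ (fun i => if ffreq (a i) (b i) (g i (Finset.mem_univ i)) = 0 then (1:ℂ) else 0)
  rw [h2, Finset.prod_boole]
  -- now equate conditions
  have hiff : (∀ i ∈ (Finset.univ : Finset (Fin d)), ffreq (a i) (b i) (g i (Finset.mem_univ i)) = 0)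
      ↔ KK t d a b g = 0 := by
    constructor
    · intro h
      unfold KK
      rw [Finset.sum_congr rfl (fun i _ => by rw [h i (Finset.mem_univ i), zero_mul])]
      simp
    · intro hK i _
      -- use basezero
      set m : ℕ → ℤ := fun k => if h : k < d then
        ffreq (a ⟨k, h⟩) (b ⟨k, h⟩) (g ⟨k, h⟩ (Finset.mem_univ _)) else 0 with hm
      have hbound : ∀ k, k < d → |m k| ≤ t := by
        intro k hk
        have hmem : g ⟨k, hk⟩ (Finset.mem_univ _) ∈ RR d a b ⟨k, hk⟩ :=
          Finset.mem_pi.mp hg _ _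
        rw [Finset.mem_product, Finset.mem_range, Finset.mem_range] at hmem
        have hab : a ⟨k, hk⟩ + b ⟨k, hk⟩ ≤ t := by
          calc a ⟨k, hk⟩ + b ⟨k, hk⟩ ≤ ∑ i : Fin d, (a i + b i) :=
                Finset.single_le_sum (f := fun i => a i + b i) (fun _ _ => Nat.zero_le _)
                  (Finset.mem_univ _)
            _ ≤ t := hdeg
        simp only [hm, dif_pos hk]
        unfold ffreq
        rw [abs_le]
        obtain ⟨h1', h2'⟩ := hmem
        constructor <;> push_cast <;> omega
      have hsum : ∑ k ∈ Finset.range d, m k * (t + 1 : ℤ) ^ (d - 1 - k) = 0 := by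
        rw [← Fin.sum_univ_eq_sum_range (fun k => m k * (t + 1 : ℤ) ^ (d - 1 - k)) d]
        rw [← hK]
        unfold KK
        refine Finset.sum_congr rfl fun i _ => ?_
        simp only [hm, dif_pos i.isLt, Fin.eta]
      have := basezero t d m hbound hsum i i.isLt
      simpa only [hm, dif_pos i.isLt, Fin.eta] using this
  by_cases h : KK t d a b g = 0
  · rw [if_pos h, if_pos (hiff.mpr h)]
  · rw [if_neg h, if_neg (fun hh => h (hiff.mp hh))]

end Monomial2

section Assemble
variable (t d : ℕ) (a b : Fin d → ℕ)

lemma monomial_real (hdeg : ∑ i : Fin d, (a i + b i) ≤ t) :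
    (∫ s in (0:ℝ)..1, ∏ i : Fin d,
        Real.cos (2 * π * ((t + 1 : ℝ) ^ (d - 1 - (i : ℕ))) * s) ^ (a i) *
        Real.sin (2 * π * ((t + 1 : ℝ) ^ (d - 1 - (i : ℕ))) * s) ^ (b i)) =
      ∏ i : Fin d, ((2*π)⁻¹ * ∫ θ in (0:ℝ)..(2*π), Real.cos θ ^ (a i) * Real.sin θ ^ (b i)) := by
  have hC := (claimA t d a b).trans (claimB t d a b hdeg).symm
  have h1 : ((∫ s in (0:ℝ)..1, ∏ i : Fin d,
        Real.cos (2 * π * ((t + 1 : ℝ) ^ (d - 1 - (i : ℕ))) * s) ^ (a i) *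
        Real.sin (2 * π * ((t + 1 : ℝ) ^ (d - 1 - (i : ℕ))) * s) ^ (b i) : ℝ) : ℂ) =
      ∫ s in (0:ℝ)..1, ∏ i : Fin d,
        ((Real.cos (2 * π * ((t + 1 : ℝ) ^ (d - 1 - (i : ℕ))) * s) : ℂ))^(a i) *
        ((Real.sin (2 * π * ((t + 1 : ℝ) ^ (d - 1 - (i : ℕ))) * s) : ℂ))^(b i) := by
    rw [← intervalIntegral.integral_ofReal]
    apply intervalIntegral.integral_congr
    intro s _
    push_cast
    rfl
  have h2 : ((∏ i : Fin d, ((2*π)⁻¹ * ∫ θ in (0:ℝ)..(2*π),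
        Real.cos θ ^ (a i) * Real.sin θ ^ (b i)) : ℝ) : ℂ) =
      ∏ i : Fin d, ((2*π:ℂ)⁻¹ *
        ∫ θ in (0:ℝ)..(2*π), ((Real.cos θ : ℂ))^(a i) * ((Real.sin θ : ℂ))^(b i)) := by
    push_cast
    apply Finset.prod_congr rfl
    intro i _
    congr 1
    rw [← intervalIntegral.integral_ofReal]
    apply intervalIntegral.integral_congr
    intro θ _
    push_cast
    rfl
  exact Complex.ofReal_inj.mp (h1.trans (hC.trans h2.symm))

lemma theta_side :
    (∫ θ in Set.univ.pi (fun _ : Fin d => Set.Ioc (0:ℝ) (2*π)),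
        ∏ i : Fin d, Real.cos (θ i) ^ (a i) * Real.sin (θ i) ^ (b i)) =
      ∏ i : Fin d, ∫ x in (0:ℝ)..(2*π), Real.cos x ^ (a i) * Real.sin x ^ (b i) := by
  have hms : MeasurableSet (Set.univ.pi fun _ : Fin d => Set.Ioc (0:ℝ) (2*π)) :=
    MeasurableSet.univ_pi (fun _ => measurableSet_Ioc)
  rw [← MeasureTheory.integral_indicator hms]
  have hind : ∀ θ : Fin d → ℝ,
      (Set.univ.pi fun _ : Fin d => Set.Ioc (0:ℝ) (2*π)).indicator
        (fun θ => ∏ i : Fin d, Real.cos (θ i) ^ (a i) * Real.sin (θ i) ^ (b i)) θ =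
      ∏ i : Fin d, (Set.Ioc (0:ℝ) (2*π)).indicator
        (fun x => Real.cos x ^ (a i) * Real.sin x ^ (b i)) (θ i) := by
    intro θ
    by_cases hθ : θ ∈ Set.univ.pi fun _ : Fin d => Set.Ioc (0:ℝ) (2*π)
    · rw [Set.indicator_of_mem hθ]
      refine Finset.prod_congr rfl fun i _ => ?_
      rw [Set.indicator_of_mem (hθ i trivial)]
    · rw [Set.indicator_of_notMem hθ]
      rw [Set.mem_univ_pi] at hθ
      push_neg at hθ
      obtain ⟨i, hi⟩ := hθ
      symm
      apply Finset.prod_eq_zero (Finset.mem_univ i)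
      rw [Set.indicator_of_notMem hi]
  simp_rw [hind]
  rw [MeasureTheory.integral_fintype_prod_volume_eq_prod (ι := Fin d)
    (f := fun i x => (Set.Ioc (0:ℝ) (2*π)).indicator
        (fun x => Real.cos x ^ (a i) * Real.sin x ^ (b i)) x)]
  refine Finset.prod_congr rfl fun i _ => ?_
  rw [MeasureTheory.integral_indicator measurableSet_Ioc,
    ← intervalIntegral.integral_of_le (by positivity)]

lemma cont_prod_trig : Continuous
    (fun θ : Fin d → ℝ => ∏ i : Fin d, Real.cos (θ i) ^ (a i) * Real.sin (θ i) ^ (b i)) := by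
  apply continuous_finset_prod
  intro i _
  exact ((Real.continuous_cos.comp (continuous_apply i)).pow _).mul
    ((Real.continuous_sin.comp (continuous_apply i)).pow _)

lemma integrableOn_prod_trig :
    IntegrableOn (fun θ : Fin d → ℝ => ∏ i : Fin d, Real.cos (θ i) ^ (a i) * Real.sin (θ i) ^ (b i))
      (Set.univ.pi fun _ : Fin d => Set.Ioc (0:ℝ) (2*π)) volume := by
  apply IntegrableOn.mono_set (t := Set.univ.pi fun _ : Fin d => Set.Icc (0:ℝ) (2*π))
  · exact (cont_prod_trig d a b).continuousOn.integrableOn_compact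
      (isCompact_univ_pi fun _ => isCompact_Icc)
  · exact Set.pi_mono fun i _ => Set.Ioc_subset_Icc_self

end Assemble


/-- for every `d ≥ 1` and `t`, the curve `γ_{t,d}` is a `t`-design curve on
the `d`-torus, with length `2π√(Σ_{j<d} (t+1)^{2j})`, which for `t ≥ 1` is at most
`2π√(Σ_{j<d} 4^j)·t^{d-1}`. -/
theorem torusCurveD_is_design (d t : ℕ) (hd : 0 < d) :
    (∀ f : MvPolynomial (Fin d × Fin 2) ℝ, f.totalDegree ≤ t →
      (∫ s in (0:ℝ)..1, ‖deriv (torusCurveD t d) s‖)⁻¹ *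
          ∫ s in (0:ℝ)..1,
            eval (WithLp.equiv 2 (Fin d × Fin 2 → ℝ) (torusCurveD t d s)) f *
            ‖deriv (torusCurveD t d) s‖ =
        (1 / (2 * π) ^ d) *
          ∫ θ in Set.univ.pi fun _ : Fin d => Set.Ioc (0:ℝ) (2 * π),
            eval (torusPoint d θ) f) ∧
    (∫ s in (0:ℝ)..1, ‖deriv (torusCurveD t d) s‖) =
      2 * π * Real.sqrt (∑ j ∈ Finset.range d, (t + 1 : ℝ) ^ (2 * j)) ∧
    (1 ≤ t →
      (∫ s in (0:ℝ)..1, ‖deriv (torusCurveD t d) s‖) ≤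
        2 * π * Real.sqrt (∑ j ∈ Finset.range d, (4 : ℝ) ^ j) * (t : ℝ) ^ (d - 1)) := by
  have hderiv : ∀ s : ℝ, deriv (torusCurveD t d) s = torusVel t d s :=
    fun s => (hasDerivAt_torusCurveD t d s).deriv
  set L := 2 * π * Real.sqrt (∑ j ∈ Finset.range d, (t + 1 : ℝ) ^ (2 * j)) with hLdef
  have hnorm : ∀ s : ℝ, ‖deriv (torusCurveD t d) s‖ = L := fun s => by
    rw [hderiv s, norm_torusVel]
  have hsum_pos : 0 < ∑ j ∈ Finset.range d, (t + 1 : ℝ) ^ (2 * j) :=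
    Finset.sum_pos (fun j _ => by positivity) ⟨0, Finset.mem_range.mpr hd⟩
  have hLpos : 0 < L := by
    have := Real.sqrt_pos.mpr hsum_pos
    rw [hLdef]; positivity
  have hlen : (∫ s in (0:ℝ)..1, ‖deriv (torusCurveD t d) s‖) = L := by
    simp only [hnorm]
    rw [intervalIntegral.integral_const]
    simp
  refine ⟨?_, hlen, fun ht => hlen ▸ length_bound d t hd ht⟩
  intro f hf
  rw [hlen]
  have heval : ∀ s ∈ Set.uIcc (0:ℝ) 1,
      eval ((WithLp.equiv 2 (Fin d × Fin 2 → ℝ)) (torusCurveD t d s)) f *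
        ‖deriv (torusCurveD t d) s‖ =
      eval ((WithLp.equiv 2 (Fin d × Fin 2 → ℝ)) (torusCurveD t d s)) f * L := fun s _ => by
    rw [hnorm s]
  rw [intervalIntegral.integral_congr heval, intervalIntegral.integral_mul_const,
    mul_comm (∫ s in (0:ℝ)..1, eval ((WithLp.equiv 2 (Fin d × Fin 2 → ℝ)) (torusCurveD t d s)) f) L,
    ← mul_assoc, inv_mul_cancel₀ hLpos.ne', one_mul]
  -- main identity
  have hXs : ∀ s : ℝ, eval ((WithLp.equiv 2 (Fin d × Fin 2 → ℝ)) (torusCurveD t d s)) f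
      = ∑ k ∈ f.support, coeff k f * ∏ i : Fin d,
          Real.cos (2 * π * ((t + 1 : ℝ) ^ (d - 1 - (i : ℕ))) * s) ^ (k (i,(0 : Fin 2))) *
          Real.sin (2 * π * ((t + 1 : ℝ) ^ (d - 1 - (i : ℕ))) * s) ^ (k (i,(1 : Fin 2))) := by
    intro s
    rw [eval_eq']
    refine Finset.sum_congr rfl fun k _ => ?_
    congr 1
    rw [Fintype.prod_prod_type]
    refine Finset.prod_congr rfl fun i _ => ?_
    rw [Fin.prod_univ_two]
    simp [torusCurveD]
  have hTheta : ∀ θ : Fin d → ℝ, eval (torusPoint d θ) f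
      = ∑ k ∈ f.support, coeff k f * ∏ i : Fin d,
          Real.cos (θ i) ^ (k (i,(0 : Fin 2))) * Real.sin (θ i) ^ (k (i,(1 : Fin 2))) := by
    intro θ
    rw [eval_eq']
    refine Finset.sum_congr rfl fun k _ => ?_
    congr 1
    rw [Fintype.prod_prod_type]
    refine Finset.prod_congr rfl fun i _ => ?_
    rw [Fin.prod_univ_two]
    simp [torusPoint]
  have hcontF : ∀ k : (Fin d × Fin 2) →₀ ℕ, Continuous (fun s : ℝ => ∏ i : Fin d,
      Real.cos (2 * π * ((t + 1 : ℝ) ^ (d - 1 - (i : ℕ))) * s) ^ (k (i,(0 : Fin 2))) *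
      Real.sin (2 * π * ((t + 1 : ℝ) ^ (d - 1 - (i : ℕ))) * s) ^ (k (i,(1 : Fin 2)))) := by
    intro k
    apply continuous_finset_prod
    intro i _
    exact ((Real.continuous_cos.comp (continuous_const.mul continuous_id)).pow _).mul
      ((Real.continuous_sin.comp (continuous_const.mul continuous_id)).pow _)
  rw [intervalIntegral.integral_congr (fun s _ => hXs s)]
  rw [intervalIntegral.integral_finset_sum (fun k _ =>
    ((continuous_const.fun_mul (hcontF k)).intervalIntegrable _ _))]
  simp_rw [hTheta]
  rw [MeasureTheory.integral_finset_sum _ (fun k _ =>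
    ((integrableOn_prod_trig d (fun i => k (i,(0:Fin 2))) (fun i => k (i,(1:Fin 2)))).const_mul _))]
  rw [Finset.mul_sum]
  refine Finset.sum_congr rfl fun k hk => ?_
  rw [intervalIntegral.integral_const_mul, MeasureTheory.integral_const_mul,
    ← mul_assoc, mul_comm (1 / (2*π) ^ d) (coeff k f), mul_assoc]
  congr 1
  have hdeg : ∑ i : Fin d, (k (i,(0:Fin 2)) + k (i,(1:Fin 2))) ≤ t := by
    have h1 : ∑ i : Fin d, (k (i,(0:Fin 2)) + k (i,(1:Fin 2))) = ∑ p : Fin d × Fin 2, k p := by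
      rw [Fintype.sum_prod_type]
      exact Finset.sum_congr rfl fun i _ => by rw [Fin.sum_univ_two]
    have h2 : ∑ p : Fin d × Fin 2, k p = k.sum fun _ e => e :=
      (Finsupp.sum_fintype k (fun _ e => e) (fun _ => rfl)).symm
    rw [h1, h2]
    exact le_trans (le_totalDegree hk) hf
  rw [monomial_real t d (fun i => k (i,(0:Fin 2))) (fun i => k (i,(1:Fin 2))) hdeg]
  rw [theta_side d (fun i => k (i,(0:Fin 2))) (fun i => k (i,(1:Fin 2)))]
  rw [Finset.prod_mul_distrib, Finset.prod_const, Finset.card_univ, Fintype.card_fin,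
    inv_pow, one_div]
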